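/- Let (Ω,F,P) be a probability space with filtration (F_n)_{n=1}^N and let (X_n), (Y_n), (W_n), n = 1,…,N, be integrable real-valued processes adapted to (F_n) satisfying X_n ≤ W_n ≤ Y_n almost surely for every n. For stopping times λ, μ with values in {1,…,N} define R(λ,μ) = E[ X_λ·1_{λ<μ} + W_λ·1_{λ=μ} + Y_μ·1_{μ<λ} ]. Then there exist stopping times λ*, μ* with values in {1,…,N} forming a saddle point: R(λ,μ*) ≤ R(λ*,μ*) ≤ R(λ*,μ) for all stopping times λ, μ with values in {1,…,N}. -/

import Mathlib

open MeasureTheory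

noncomputable section

/-- The expected payoff of Neveu's stopping game:
`R(λ,μ) = E[X_λ·1_{λ<μ} + W_λ·1_{λ=μ} + Y_μ·1_{μ<λ}]`. -/
def neveuPayoff {Ω : Type*} [MeasurableSpace Ω] (P : Measure Ω)
    (X Y W : ℕ → Ω → ℝ) (lam mu : Ω → ℕ) : ℝ :=
  ∫ ω, (if lam ω < mu ω then X (lam ω) ω
        else if lam ω = mu ω then W (lam ω) ω
        else Y (mu ω) ω) ∂P

namespace NeveuAuxNS
variable {Ω : Type*} {m : MeasurableSpace Ω}

def nvAux (P : Measure Ω) (F : Filtration ℕ m) (N : ℕ)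
    (X Y W : ℕ → Ω → ℝ) : ℕ → Ω → ℝ
  | 0 => W N
  | (j+1) => fun ω => min (Y (N - j - 1) ω)
      (max (X (N - j - 1) ω) ((P[nvAux P F N X Y W j | F (N - j - 1)]) ω))

def nvV (P : Measure Ω) (F : Filtration ℕ m) (N : ℕ)
    (X Y W : ℕ → Ω → ℝ) (n : ℕ) : Ω → ℝ :=
  nvAux P F N X Y W (N - n)

lemma nvV_ge (P : Measure Ω) (F : Filtration ℕ m) (N : ℕ)
    (X Y W : ℕ → Ω → ℝ) {n : ℕ} (h : N ≤ n) : nvV P F N X Y W n = W N := by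
  rw [nvV, Nat.sub_eq_zero_of_le h, nvAux]

lemma nvV_lt (P : Measure Ω) (F : Filtration ℕ m) (N : ℕ)
    (X Y W : ℕ → Ω → ℝ) {n : ℕ} (h : n < N) :
    nvV P F N X Y W n = fun ω => min (Y n ω)
      (max (X n ω) ((P[nvV P F N X Y W (n+1) | F n]) ω)) := by
  have h1 : N - n = (N - (n+1)) + 1 := by omega
  have h2 : N - (N - (n+1)) - 1 = n := by omega
  simp only [nvV, h1, nvAux, h2]

lemma nvV_integrable (P : Measure Ω) [IsFiniteMeasure P] (F : Filtration ℕ m) (N : ℕ)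
    (X Y W : ℕ → Ω → ℝ) (hN : 1 ≤ N)
    (hint : ∀ n, 1 ≤ n → n ≤ N →
      Integrable (X n) P ∧ Integrable (Y n) P ∧ Integrable (W n) P)
    {n : ℕ} (hn : 1 ≤ n) : Integrable (nvV P F N X Y W n) P := by
  have key : ∀ j, j < N → Integrable (nvAux P F N X Y W j) P := by
    intro j
    induction j with
    | zero => intro _; rw [show nvAux P F N X Y W 0 = W N from rfl]; exact (hint N hN le_rfl).2.2
    | succ j ih =>
      intro hj
      have hk1 : 1 ≤ N - j - 1 := by omega
      have hk2 : N - j - 1 ≤ N := by omega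
      have hY := (hint _ hk1 hk2).2.1
      have hX := (hint _ hk1 hk2).1
      have hE : Integrable (P[nvAux P F N X Y W j | F (N - j - 1)]) P := integrable_condExp
      have := hY.inf (hX.sup hE)
      rw [show nvAux P F N X Y W (j+1) = fun ω => min (Y (N - j - 1) ω)
        (max (X (N - j - 1) ω) ((P[nvAux P F N X Y W j | F (N - j - 1)]) ω)) from rfl]
      exact this
  rw [nvV]
  exact key _ (by omega)

lemma nv_gt {F : Filtration ℕ m} {τ : Ω → ℕ}
    (hτ : IsStoppingTime F (fun ω => (τ ω : WithTop ℕ))) (n : ℕ) :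
    MeasurableSet[F n] {ω | n < τ ω} := by
  have := hτ.measurableSet_gt n
  simpa using this
lemma nv_min {F : Filtration ℕ m} {τ π : Ω → ℕ}
    (hτ : IsStoppingTime F (fun ω => (τ ω : WithTop ℕ)))
    (hπ : IsStoppingTime F (fun ω => (π ω : WithTop ℕ))) :
    IsStoppingTime F (fun ω => ((min (τ ω) (π ω) : ℕ) : WithTop ℕ)) := by
  intro i
  have := (hτ.min hπ) i
  convert this using 3 with ω
  simp
lemma nv_le {F : Filtration ℕ m} {τ : Ω → ℕ} (n : ℕ)
    (h : MeasurableSet[F n] {ω | τ ω ≤ n}) :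
    MeasurableSet[F n] {ω | (fun ω => (τ ω : WithTop ℕ)) ω ≤ (n : WithTop ℕ)} := by
  simpa using h
lemma nv_meas {F : Filtration ℕ m} {τ : Ω → ℕ} {N : ℕ}
    (hτ : IsStoppingTime F (fun ω => (τ ω : WithTop ℕ))) (h : ∀ ω, τ ω ≤ N) :
    Measurable[F N] τ := by
  have := (hτ.measurable_of_le (i := N) (fun ω => WithTop.coe_le_coe.mpr (h ω))).untopA
  convert this using 1
  funext ω
  rfl
end NeveuAuxNS

open NeveuAuxNS

/-- (Finite-horizon Neveu game.) For integrable adapted processes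
`X, Y, W` with `X_n ≤ W_n ≤ Y_n` a.s., there is a saddle point `(λ*, μ*)` in pure
stopping times with values in `{1,…,N}`:
`R(λ,μ*) ≤ R(λ*,μ*) ≤ R(λ*,μ)` for all such stopping times `λ, μ`. -/
theorem neveu_game_saddle {Ω : Type*} {m : MeasurableSpace Ω}
    (P : Measure Ω) [IsProbabilityMeasure P] (F : Filtration ℕ m)
    (N : ℕ) (hN : 1 ≤ N) (X Y W : ℕ → Ω → ℝ)
    (hadapt : ∀ n, 1 ≤ n → n ≤ N →
      Measurable[F n] (X n) ∧ Measurable[F n] (Y n) ∧ Measurable[F n] (W n))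
    (hint : ∀ n, 1 ≤ n → n ≤ N →
      Integrable (X n) P ∧ Integrable (Y n) P ∧ Integrable (W n) P)
    (horder : ∀ n, 1 ≤ n → n ≤ N → ∀ᵐ ω ∂P, X n ω ≤ W n ω ∧ W n ω ≤ Y n ω) :
    ∃ lams mus : Ω → ℕ,
      IsStoppingTime F (fun ω => (lams ω : WithTop ℕ)) ∧ (∀ ω, lams ω ∈ Finset.Icc 1 N) ∧
      IsStoppingTime F (fun ω => (mus ω : WithTop ℕ)) ∧ (∀ ω, mus ω ∈ Finset.Icc 1 N) ∧
      ∀ lam mu : Ω → ℕ,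
        IsStoppingTime F (fun ω => (lam ω : WithTop ℕ)) → (∀ ω, lam ω ∈ Finset.Icc 1 N) →
        IsStoppingTime F (fun ω => (mu ω : WithTop ℕ)) → (∀ ω, mu ω ∈ Finset.Icc 1 N) →
          neveuPayoff P X Y W lam mus ≤ neveuPayoff P X Y W lams mus ∧
            neveuPayoff P X Y W lams mus ≤ neveuPayoff P X Y W lams mu := by
  classical
  set V : ℕ → Ω → ℝ := nvV P F N X Y W with hVdef
  set En : ℕ → Ω → ℝ := fun n => P[V (n+1) | F n] with hEndef
  have hVlt : ∀ {n : ℕ}, n < N → ∀ ω, V n ω = min (Y n ω) (max (X n ω) (En n ω)) := by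
    intro n h ω
    exact congrFun (nvV_lt P F N X Y W h) ω
  have hVN : ∀ ω, V N ω = W N ω := by
    intro ω; rw [hVdef, nvV_ge P F N X Y W le_rfl]
  have hVint : ∀ n, 1 ≤ n → Integrable (V n) P := fun n hn =>
    nvV_integrable P F N X Y W hN hint hn
  -- the two optimal stopping times
  have hPμex : ∀ ω, ∃ k, N ≤ k ∨ (1 ≤ k ∧ Y k ω ≤ En k ω) := fun ω => ⟨N, Or.inl le_rfl⟩
  have hPlex : ∀ ω, ∃ k, N ≤ k ∨ (1 ≤ k ∧ En k ω ≤ X k ω) := fun ω => ⟨N, Or.inl le_rfl⟩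
  set mus : Ω → ℕ := fun ω => Nat.find (hPμex ω) with hmusdef
  set lams : Ω → ℕ := fun ω => Nat.find (hPlex ω) with hlamsdef
  have hmusN : ∀ ω, mus ω ≤ N := fun ω => Nat.find_le (Or.inl le_rfl)
  have hlamsN : ∀ ω, lams ω ≤ N := fun ω => Nat.find_le (Or.inl le_rfl)
  have hmus_eq : ∀ ω, mus ω = Nat.find (hPμex ω) := fun ω => rfl
  have hlams_eq : ∀ ω, lams ω = Nat.find (hPlex ω) := fun ω => rfl
  have hmus1 : ∀ ω, 1 ≤ mus ω := by
    intro ω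
    rw [hmus_eq ω]
    rcases Nat.find_spec (hPμex ω) with h | h
    · omega
    · exact h.1
  have hlams1 : ∀ ω, 1 ≤ lams ω := by
    intro ω
    rw [hlams_eq ω]
    rcases Nat.find_spec (hPlex ω) with h | h
    · omega
    · exact h.1
  have hmus_spec : ∀ ω, mus ω < N → Y (mus ω) ω ≤ En (mus ω) ω := by
    intro ω h
    rw [hmus_eq ω] at h ⊢
    rcases Nat.find_spec (hPμex ω) with h' | h'
    · omega
    · exact h'.2
  have hlams_spec : ∀ ω, lams ω < N → En (lams ω) ω ≤ X (lams ω) ω := by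
    intro ω h
    rw [hlams_eq ω] at h ⊢
    rcases Nat.find_spec (hPlex ω) with h' | h'
    · omega
    · exact h'.2
  have hmus_min : ∀ ω k, 1 ≤ k → k < mus ω → En k ω < Y k ω := by
    intro ω k hk hlt
    rw [hmus_eq ω] at hlt
    have := Nat.find_min (hPμex ω) hlt
    push_neg at this
    exact this.2 hk
  have hlams_min : ∀ ω k, 1 ≤ k → k < lams ω → X k ω < En k ω := by
    intro ω k hk hlt
    rw [hlams_eq ω] at hlt
    have := Nat.find_min (hPlex ω) hlt
    push_neg at this
    exact this.2 hk
  -- En is F n measurable, Y/X are F n measurable: stopping times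
  have hEnMeas : ∀ n, Measurable[F n] (En n) := fun n =>
    stronglyMeasurable_condExp.measurable
  have hmusST : IsStoppingTime F (fun ω => (mus ω : WithTop ℕ)) := by
    intro n
    apply nv_le
    have hset : {ω | mus ω ≤ n} = ⋃ k ∈ Finset.range (n+1),
        {ω | N ≤ k ∨ (1 ≤ k ∧ Y k ω ≤ En k ω)} := by
      ext ω
      simp only [Set.mem_setOf_eq, hmusdef, Nat.find_le_iff, Set.mem_iUnion,
        Finset.mem_range, Nat.lt_succ_iff, Set.mem_setOf_eq, exists_prop]
    rw [hset]
    refine MeasurableSet.biUnion (Finset.range (n+1)).countable_toSet (fun k hk => ?_)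
    have hkn : k ≤ n := Nat.lt_succ_iff.mp (Finset.mem_range.mp (Finset.mem_coe.mp hk))
    rcases le_or_gt N k with hNk | hNk
    · have : {ω | N ≤ k ∨ (1 ≤ k ∧ Y k ω ≤ En k ω)} = Set.univ := by
        ext ω; simp [hNk]
      rw [this]; exact @MeasurableSet.univ _ (F n)
    · rcases Nat.eq_zero_or_pos k with hk0 | hk1
      · have : {ω | N ≤ k ∨ (1 ≤ k ∧ Y k ω ≤ En k ω)} = ∅ := by
          ext ω; simp [hk0]; omega
        rw [this]; exact @MeasurableSet.empty _ (F n)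
      · have : {ω | N ≤ k ∨ (1 ≤ k ∧ Y k ω ≤ En k ω)} = {ω | Y k ω ≤ En k ω} := by
          ext ω; simp [hk1, not_le.2 hNk]; omega
        rw [this]
        have hmY : Measurable[F k] (Y k) := (hadapt k hk1 hNk.le).2.1
        have : MeasurableSet[F k] {ω | Y k ω ≤ En k ω} :=
          MeasureTheory.StronglyMeasurable.measurableSet_le hmY.stronglyMeasurable stronglyMeasurable_condExp
        exact F.mono hkn _ this
  have hlamsST : IsStoppingTime F (fun ω => (lams ω : WithTop ℕ)) := by
    intro n
    apply nv_le
    have hset : {ω | lams ω ≤ n} = ⋃ k ∈ Finset.range (n+1),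
        {ω | N ≤ k ∨ (1 ≤ k ∧ En k ω ≤ X k ω)} := by
      ext ω
      simp only [Set.mem_setOf_eq, hlamsdef, Nat.find_le_iff, Set.mem_iUnion,
        Finset.mem_range, Nat.lt_succ_iff, Set.mem_setOf_eq, exists_prop]
    rw [hset]
    refine MeasurableSet.biUnion (Finset.range (n+1)).countable_toSet (fun k hk => ?_)
    have hkn : k ≤ n := Nat.lt_succ_iff.mp (Finset.mem_range.mp (Finset.mem_coe.mp hk))
    rcases le_or_gt N k with hNk | hNk
    · have : {ω | N ≤ k ∨ (1 ≤ k ∧ En k ω ≤ X k ω)} = Set.univ := by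
        ext ω; simp [hNk]
      rw [this]; exact @MeasurableSet.univ _ (F n)
    · rcases Nat.eq_zero_or_pos k with hk0 | hk1
      · have : {ω | N ≤ k ∨ (1 ≤ k ∧ En k ω ≤ X k ω)} = ∅ := by
          ext ω; simp [hk0]; omega
        rw [this]; exact @MeasurableSet.empty _ (F n)
      · have : {ω | N ≤ k ∨ (1 ≤ k ∧ En k ω ≤ X k ω)} = {ω | En k ω ≤ X k ω} := by
          ext ω; simp [hk1, not_le.2 hNk]; omega
        rw [this]
        have hmX : Measurable[F k] (X k) := (hadapt k hk1 hNk.le).1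
        have : MeasurableSet[F k] {ω | En k ω ≤ X k ω} :=
          MeasureTheory.StronglyMeasurable.measurableSet_le stronglyMeasurable_condExp hmX.stronglyMeasurable
        exact F.mono hkn _ this

  -- telescoping identity
  have htele : ∀ (τ : Ω → ℕ), (∀ ω, 1 ≤ τ ω) → (∀ ω, τ ω ≤ N) → ∀ ω,
      V (τ ω) ω = V 1 ω + ∑ n ∈ Finset.Ico 1 N,
        (if n < τ ω then V (n+1) ω - V n ω else 0) := by
    intro τ h1 h2 ω
    have key : ∀ b, 1 ≤ b → b ≤ N → V b ω = V 1 ω + ∑ n ∈ Finset.Ico 1 N,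
        (if n < b then V (n+1) ω - V n ω else 0) := by
      intro b hb
      induction b, hb using Nat.le_induction with
      | base =>
        intro _
        have hz : ∀ n ∈ Finset.Ico 1 N, (if n < 1 then V (n+1) ω - V n ω else 0) = 0 := by
          intro n hn
          rw [if_neg]
          have := (Finset.mem_Ico.mp hn).1
          omega
        rw [Finset.sum_congr rfl hz, Finset.sum_const_zero, add_zero]
      | succ b hb ih =>
        intro hbN
        have hsum : ∑ n ∈ Finset.Ico 1 N, (if n < b + 1 then V (n+1) ω - V n ω else 0)
            = ∑ n ∈ Finset.Ico 1 N, ((if n < b then V (n+1) ω - V n ω else 0)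
              + (if n = b then V (n+1) ω - V n ω else 0)) := by
          refine Finset.sum_congr rfl (fun n hn => ?_)
          by_cases ha : n < b
          · rw [if_pos (by omega), if_pos ha, if_neg (by omega), add_zero]
          · by_cases hb' : n = b
            · rw [if_pos (by omega), if_neg ha, if_pos hb', zero_add]
            · rw [if_neg (by omega), if_neg ha, if_neg hb', add_zero]
        have hone : ∑ n ∈ Finset.Ico 1 N, (if n = b then V (n+1) ω - V n ω else 0)
            = V (b+1) ω - V b ω := by
          rw [Finset.sum_ite_eq' (Finset.Ico 1 N) b (fun n => V (n+1) ω - V n ω),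
            if_pos (Finset.mem_Ico.mpr ⟨hb, by omega⟩)]
        rw [hsum, Finset.sum_add_distrib, hone]
        have := ih (by omega)
        linarith
    exact key (τ ω) (h1 ω) (h2 ω)
  have hIndEq : ∀ (τ : Ω → ℕ) (n : ℕ),
      (fun ω => if n < τ ω then V (n+1) ω - V n ω else 0)
        = Set.indicator {ω | n < τ ω} (fun ω => V (n+1) ω - V n ω) := by
    intro τ n
    funext ω
    simp [Set.indicator_apply, Set.mem_setOf_eq]
  have hIntInd : ∀ (τ : Ω → ℕ), IsStoppingTime F (fun ω => (τ ω : WithTop ℕ)) → ∀ n, 1 ≤ n →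
      Integrable (fun ω => if n < τ ω then V (n+1) ω - V n ω else 0) P := by
    intro τ hτ n h1
    rw [hIndEq]
    have hA : MeasurableSet {ω | n < τ ω} := F.le n _ (nv_gt hτ n)
    exact ((hVint (n+1) (by omega)).sub (hVint n h1)).indicator hA
  have hSVrep : ∀ (τ : Ω → ℕ), (∀ ω, 1 ≤ τ ω) → (∀ ω, τ ω ≤ N) →
      (fun ω => V (τ ω) ω) = fun ω => V 1 ω + ∑ n ∈ Finset.Ico 1 N,
        (if n < τ ω then V (n+1) ω - V n ω else 0) := fun τ h1 h2 => funext (htele τ h1 h2)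
  have hSVint : ∀ (τ : Ω → ℕ), IsStoppingTime F (fun ω => (τ ω : WithTop ℕ)) → (∀ ω, 1 ≤ τ ω) → (∀ ω, τ ω ≤ N) →
      Integrable (fun ω => V (τ ω) ω) P := by
    intro τ hτ h1 h2
    rw [hSVrep τ h1 h2]
    exact (hVint 1 le_rfl).add (integrable_finset_sum _ fun n hn =>
      hIntInd τ hτ n (Finset.mem_Ico.mp hn).1)
  have hSVintegral : ∀ (τ : Ω → ℕ), IsStoppingTime F (fun ω => (τ ω : WithTop ℕ)) → (∀ ω, 1 ≤ τ ω) → (∀ ω, τ ω ≤ N) →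
      ∫ ω, V (τ ω) ω ∂P = ∫ ω, V 1 ω ∂P + ∑ n ∈ Finset.Ico 1 N,
        ∫ ω, (if n < τ ω then V (n+1) ω - V n ω else 0) ∂P := by
    intro τ hτ h1 h2
    rw [hSVrep τ h1 h2,
      integral_add (hVint 1 le_rfl) (integrable_finset_sum _ fun n hn =>
        hIntInd τ hτ n (Finset.mem_Ico.mp hn).1),
      integral_finset_sum _ (fun n hn => hIntInd τ hτ n (Finset.mem_Ico.mp hn).1)]
  have hterm : ∀ (τ : Ω → ℕ), IsStoppingTime F (fun ω => (τ ω : WithTop ℕ)) → ∀ n, 1 ≤ n →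
      ∫ ω, (if n < τ ω then V (n+1) ω - V n ω else 0) ∂P
        = ∫ ω in {ω | n < τ ω}, (En n ω - V n ω) ∂P := by
    intro τ hτ n h1
    have hAm : MeasurableSet[F n] {ω | n < τ ω} := nv_gt hτ n
    have hA : MeasurableSet {ω | n < τ ω} := F.le n _ hAm
    rw [hIndEq, integral_indicator hA,
      integral_sub ((hVint (n+1) (by omega)).integrableOn) ((hVint n h1).integrableOn),
      integral_sub (integrable_condExp.integrableOn) ((hVint n h1).integrableOn)]
    congr 1
    exact (setIntegral_condExp (F.le n) (hVint (n+1) (by omega)) hAm).symm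
  -- the three one-step comparison integral lemmas
  have hle_super : ∀ (τ : Ω → ℕ), IsStoppingTime F (fun ω => (τ ω : WithTop ℕ)) → (∀ ω, 1 ≤ τ ω) → (∀ ω, τ ω ≤ N) →
      (∀ n ω, 1 ≤ n → n < τ ω → En n ω ≤ V n ω) →
      ∫ ω, V (τ ω) ω ∂P ≤ ∫ ω, V 1 ω ∂P := by
    intro τ hτ h1 h2 hmono
    rw [hSVintegral τ hτ h1 h2]
    have hsum : ∑ n ∈ Finset.Ico 1 N,
        ∫ ω, (if n < τ ω then V (n+1) ω - V n ω else 0) ∂P ≤ 0 := by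
      refine Finset.sum_nonpos (fun n hn => ?_)
      have hn1 := (Finset.mem_Ico.mp hn).1
      rw [hterm τ hτ n hn1]
      have hA : MeasurableSet {ω | n < τ ω} := F.le n _ (nv_gt hτ n)
      have hmle : ∫ ω in {ω | n < τ ω}, (En n ω - V n ω) ∂P
          ≤ ∫ ω in {ω | n < τ ω}, (0:ℝ) ∂P := by
        refine setIntegral_mono_on ((integrable_condExp.sub (hVint n hn1)).integrableOn)
          (integrableOn_zero) hA (fun ω hω => ?_)
        exact sub_nonpos.mpr (hmono n ω hn1 hω)
      simpa using hmle
    linarith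
  have hge_sub : ∀ (τ : Ω → ℕ), IsStoppingTime F (fun ω => (τ ω : WithTop ℕ)) → (∀ ω, 1 ≤ τ ω) → (∀ ω, τ ω ≤ N) →
      (∀ n ω, 1 ≤ n → n < τ ω → V n ω ≤ En n ω) →
      ∫ ω, V 1 ω ∂P ≤ ∫ ω, V (τ ω) ω ∂P := by
    intro τ hτ h1 h2 hmono
    rw [hSVintegral τ hτ h1 h2]
    have hsum : (0:ℝ) ≤ ∑ n ∈ Finset.Ico 1 N,
        ∫ ω, (if n < τ ω then V (n+1) ω - V n ω else 0) ∂P := by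
      refine Finset.sum_nonneg (fun n hn => ?_)
      have hn1 := (Finset.mem_Ico.mp hn).1
      rw [hterm τ hτ n hn1]
      have hA : MeasurableSet {ω | n < τ ω} := F.le n _ (nv_gt hτ n)
      have hmle : ∫ ω in {ω | n < τ ω}, (0:ℝ) ∂P
          ≤ ∫ ω in {ω | n < τ ω}, (En n ω - V n ω) ∂P := by
        refine setIntegral_mono_on (integrableOn_zero)
          ((integrable_condExp.sub (hVint n hn1)).integrableOn) hA (fun ω hω => ?_)
        exact sub_nonneg.mpr (hmono n ω hn1 hω)
      simpa using hmle
    linarith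
  have heq_mart : ∀ (τ : Ω → ℕ), IsStoppingTime F (fun ω => (τ ω : WithTop ℕ)) → (∀ ω, 1 ≤ τ ω) → (∀ ω, τ ω ≤ N) →
      (∀ n ω, 1 ≤ n → n < τ ω → En n ω = V n ω) →
      ∫ ω, V (τ ω) ω ∂P = ∫ ω, V 1 ω ∂P := by
    intro τ hτ h1 h2 hmono
    rw [hSVintegral τ hτ h1 h2]
    have hsum : ∑ n ∈ Finset.Ico 1 N,
        ∫ ω, (if n < τ ω then V (n+1) ω - V n ω else 0) ∂P = 0 := by
      refine Finset.sum_eq_zero (fun n hn => ?_)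
      have hn1 := (Finset.mem_Ico.mp hn).1
      rw [hterm τ hτ n hn1]
      have hA : MeasurableSet {ω | n < τ ω} := F.le n _ (nv_gt hτ n)
      have hz : ∫ ω in {ω | n < τ ω}, (En n ω - V n ω) ∂P
          = ∫ ω in {ω | n < τ ω}, (0:ℝ) ∂P := by
        refine setIntegral_congr_fun hA (fun ω hω => ?_)
        exact sub_eq_zero.mpr (hmono n ω hn1 hω)
      simpa using hz
    rw [hsum, add_zero]

  -- measurability of bounded stopping times
  have hmeasτ : ∀ (τ : Ω → ℕ), IsStoppingTime F (fun ω => (τ ω : WithTop ℕ)) → (∀ ω, τ ω ∈ Finset.Icc 1 N) →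
      Measurable τ := by
    intro τ hτ hb
    exact (nv_meas hτ (fun ω => (Finset.mem_Icc.mp (hb ω)).2)).mono (F.le N) le_rfl
  -- payoff integrand as a finite sum of indicators
  have hpayrep : ∀ (lam mu : Ω → ℕ), (∀ ω, lam ω ∈ Finset.Icc 1 N) →
      (∀ ω, mu ω ∈ Finset.Icc 1 N) → ∀ ω,
      (if lam ω < mu ω then X (lam ω) ω else if lam ω = mu ω then W (lam ω) ω else Y (mu ω) ω)
        = ∑ n ∈ Finset.Icc 1 N,
            ((if lam ω = n ∧ n < mu ω then X n ω else 0)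
             + (if lam ω = n ∧ mu ω = n then W n ω else 0)
             + (if mu ω = n ∧ n < lam ω then Y n ω else 0)) := by
    intro lam mu hl hm ω
    rw [Finset.sum_add_distrib, Finset.sum_add_distrib]
    have e1 : ∑ n ∈ Finset.Icc 1 N, (if lam ω = n ∧ n < mu ω then X n ω else 0)
        = if lam ω < mu ω then X (lam ω) ω else 0 := by
      simp only [ite_and]
      rw [Finset.sum_ite_eq (Finset.Icc 1 N) (lam ω)
        (fun n => if n < mu ω then X n ω else 0), if_pos (hl ω)]
    have e2 : ∑ n ∈ Finset.Icc 1 N, (if lam ω = n ∧ mu ω = n then W n ω else 0)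
        = if lam ω = mu ω then W (lam ω) ω else 0 := by
      simp only [ite_and]
      rw [Finset.sum_ite_eq (Finset.Icc 1 N) (lam ω)
        (fun n => if mu ω = n then W n ω else 0), if_pos (hl ω)]
      by_cases h : lam ω = mu ω
      · rw [if_pos h.symm, if_pos h]
      · rw [if_neg (fun h' => h h'.symm), if_neg h]
    have e3 : ∑ n ∈ Finset.Icc 1 N, (if mu ω = n ∧ n < lam ω then Y n ω else 0)
        = if mu ω < lam ω then Y (mu ω) ω else 0 := by
      simp only [ite_and]
      rw [Finset.sum_ite_eq (Finset.Icc 1 N) (mu ω)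
        (fun n => if n < lam ω then Y n ω else 0), if_pos (hm ω)]
    rw [e1, e2, e3]
    rcases lt_trichotomy (lam ω) (mu ω) with h | h | h
    · rw [if_pos h, if_pos h, if_neg (by omega), if_neg (by omega)]
      ring
    · rw [if_neg (by omega), if_pos h, if_neg (by omega), if_pos h, if_neg (by omega)]
      ring
    · rw [if_neg (by omega), if_neg (by omega), if_neg (by omega), if_neg (by omega), if_pos h]
      ring
  have hpayint : ∀ (lam mu : Ω → ℕ), IsStoppingTime F (fun ω => (lam ω : WithTop ℕ)) → (∀ ω, lam ω ∈ Finset.Icc 1 N) →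
      IsStoppingTime F (fun ω => (mu ω : WithTop ℕ)) → (∀ ω, mu ω ∈ Finset.Icc 1 N) →
      Integrable (fun ω => if lam ω < mu ω then X (lam ω) ω
        else if lam ω = mu ω then W (lam ω) ω else Y (mu ω) ω) P := by
    intro lam mu hlam hl hmu hm
    have hml : Measurable lam := hmeasτ lam hlam hl
    have hmm : Measurable mu := hmeasτ mu hmu hm
    have hrw : (fun ω => if lam ω < mu ω then X (lam ω) ω
        else if lam ω = mu ω then W (lam ω) ω else Y (mu ω) ω)
        = fun ω => ∑ n ∈ Finset.Icc 1 N,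
            ((if lam ω = n ∧ n < mu ω then X n ω else 0)
             + (if lam ω = n ∧ mu ω = n then W n ω else 0)
             + (if mu ω = n ∧ n < lam ω then Y n ω else 0)) := funext (hpayrep lam mu hl hm)
    rw [hrw]
    refine integrable_finset_sum _ (fun n hn => ?_)
    have hn1 := (Finset.mem_Icc.mp hn).1
    have hn2 := (Finset.mem_Icc.mp hn).2
    have hi1 : Integrable (fun ω => if lam ω = n ∧ n < mu ω then X n ω else 0) P := by
      have hs : MeasurableSet {ω | lam ω = n ∧ n < mu ω} := by
        have hrw2 : {ω | lam ω = n ∧ n < mu ω} = lam ⁻¹' {n} ∩ mu ⁻¹' (Set.Ioi n) := by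
          ext ω; simp [Set.mem_preimage, Set.mem_Ioi]
        rw [hrw2]
        exact (hml (measurableSet_singleton n)).inter (hmm measurableSet_Ioi)
      have := ((hint n hn1 hn2).1).indicator hs
      refine this.congr (Filter.Eventually.of_forall (fun ω => ?_))
      simp [Set.indicator_apply, Set.mem_setOf_eq]
    have hi2 : Integrable (fun ω => if lam ω = n ∧ mu ω = n then W n ω else 0) P := by
      have hs : MeasurableSet {ω | lam ω = n ∧ mu ω = n} := by
        have hrw2 : {ω | lam ω = n ∧ mu ω = n} = lam ⁻¹' {n} ∩ mu ⁻¹' {n} := by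
          ext ω; simp [Set.mem_preimage]
        rw [hrw2]
        exact (hml (measurableSet_singleton n)).inter (hmm (measurableSet_singleton n))
      have := ((hint n hn1 hn2).2.2).indicator hs
      refine this.congr (Filter.Eventually.of_forall (fun ω => ?_))
      simp [Set.indicator_apply, Set.mem_setOf_eq]
    have hi3 : Integrable (fun ω => if mu ω = n ∧ n < lam ω then Y n ω else 0) P := by
      have hs : MeasurableSet {ω | mu ω = n ∧ n < lam ω} := by
        have hrw2 : {ω | mu ω = n ∧ n < lam ω} = mu ⁻¹' {n} ∩ lam ⁻¹' (Set.Ioi n) := by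
          ext ω; simp [Set.mem_preimage, Set.mem_Ioi]
        rw [hrw2]
        exact (hmm (measurableSet_singleton n)).inter (hml measurableSet_Ioi)
      have := ((hint n hn1 hn2).2.1).indicator hs
      refine this.congr (Filter.Eventually.of_forall (fun ω => ?_))
      simp [Set.indicator_apply, Set.mem_setOf_eq]
    exact (hi1.add hi2).add hi3
  -- a.e. good set
  have hgood : ∀ᵐ ω ∂P, ∀ n, 1 ≤ n → n ≤ N → X n ω ≤ W n ω ∧ W n ω ≤ Y n ω := by
    rw [MeasureTheory.ae_all_iff]
    intro n
    by_cases h1 : 1 ≤ n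
    · by_cases h2 : n ≤ N
      · filter_upwards [horder n h1 h2] with ω h _ _
        exact h
      · filter_upwards with ω h h'
        exact absurd h' h2
    · filter_upwards with ω h
      exact absurd h h1
  -- pointwise comparisons
  have hcomp_le : ∀ (lam : Ω → ℕ), (∀ ω, lam ω ∈ Finset.Icc 1 N) → ∀ ω,
      (∀ n, 1 ≤ n → n ≤ N → X n ω ≤ W n ω ∧ W n ω ≤ Y n ω) →
      (if lam ω < mus ω then X (lam ω) ω else if lam ω = mus ω then W (lam ω) ω
        else Y (mus ω) ω) ≤ V (min (lam ω) (mus ω)) ω := by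
    intro lam hl ω hg
    have hl1 := (Finset.mem_Icc.mp (hl ω)).1
    have hl2 := (Finset.mem_Icc.mp (hl ω)).2
    rcases lt_trichotomy (lam ω) (mus ω) with h | h | h
    · rw [if_pos h, min_eq_left h.le]
      have hlt : lam ω < N := by have := hmusN ω; omega
      rw [hVlt hlt]
      exact le_min ((hg _ hl1 hl2).1.trans (hg _ hl1 hl2).2) (le_max_left _ _)
    · rw [if_neg (by omega), if_pos h, min_eq_left h.le]
      rcases eq_or_lt_of_le hl2 with hN' | hN'
      · rw [hN', hVN ω]
      · have hmuslt : mus ω < N := by omega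
        have hyE : Y (lam ω) ω ≤ En (lam ω) ω := by
          rw [h]; exact hmus_spec ω hmuslt
        rw [hVlt hN']
        exact le_min (hg _ hl1 hl2).2
          (le_trans ((hg _ hl1 hl2).2.trans hyE) (le_max_right _ _))
    · rw [if_neg (by omega), if_neg (by omega), min_eq_right h.le]
      have hlt : mus ω < N := by omega
      have hyE := hmus_spec ω hlt
      rw [hVlt hlt]
      exact le_min le_rfl (le_trans hyE (le_max_right _ _))
  have hcomp_eq : ∀ ω, (∀ n, 1 ≤ n → n ≤ N → X n ω ≤ W n ω ∧ W n ω ≤ Y n ω) →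
      (if lams ω < mus ω then X (lams ω) ω else if lams ω = mus ω then W (lams ω) ω
        else Y (mus ω) ω) = V (min (lams ω) (mus ω)) ω := by
    intro ω hg
    rcases lt_trichotomy (lams ω) (mus ω) with h | h | h
    · rw [if_pos h, min_eq_left h.le]
      have hlt : lams ω < N := by have := hmusN ω; omega
      have hEX := hlams_spec ω hlt
      rw [hVlt hlt, max_eq_left hEX,
        min_eq_right ((hg _ (hlams1 ω) hlt.le).1.trans (hg _ (hlams1 ω) hlt.le).2)]
    · rw [if_neg (by omega), if_pos h, min_eq_left h.le]
      rcases eq_or_lt_of_le (hlamsN ω) with hN' | hN'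
      · rw [hN', hVN ω]
      · have hmuslt : mus ω < N := by omega
        have hEX := hlams_spec ω hN'
        have hYE : Y (lams ω) ω ≤ En (lams ω) ω := by
          rw [h]; exact hmus_spec ω hmuslt
        have h1' := (hg _ (hlams1 ω) hN'.le).1
        have h2' := (hg _ (hlams1 ω) hN'.le).2
        rw [hVlt hN', max_eq_left hEX, min_eq_right (h1'.trans h2')]
        exact le_antisymm (h2'.trans (hYE.trans hEX)) h1'
    · rw [if_neg (by omega), if_neg (by omega), min_eq_right h.le]
      have hlt : mus ω < N := by have := hlamsN ω; omega
      have hYE := hmus_spec ω hlt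
      rw [hVlt hlt, min_eq_left (le_trans hYE (le_max_right _ _))]
  have hcomp_ge : ∀ (mu : Ω → ℕ), (∀ ω, mu ω ∈ Finset.Icc 1 N) → ∀ ω,
      (∀ n, 1 ≤ n → n ≤ N → X n ω ≤ W n ω ∧ W n ω ≤ Y n ω) →
      V (min (lams ω) (mu ω)) ω ≤
        (if lams ω < mu ω then X (lams ω) ω else if lams ω = mu ω then W (lams ω) ω
          else Y (mu ω) ω) := by
    intro mu hm ω hg
    have hm1 := (Finset.mem_Icc.mp (hm ω)).1
    have hm2 := (Finset.mem_Icc.mp (hm ω)).2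
    rcases lt_trichotomy (lams ω) (mu ω) with h | h | h
    · rw [if_pos h, min_eq_left h.le]
      have hlt : lams ω < N := by omega
      have hEX := hlams_spec ω hlt
      rw [hVlt hlt, max_eq_left hEX,
        min_eq_right ((hg _ (hlams1 ω) hlt.le).1.trans (hg _ (hlams1 ω) hlt.le).2)]
    · rw [if_neg (by omega), if_pos h, min_eq_left h.le]
      rcases eq_or_lt_of_le (hlamsN ω) with hN' | hN'
      · rw [hN', hVN ω]
      · have hEX := hlams_spec ω hN'
        rw [hVlt hN', max_eq_left hEX,
          min_eq_right ((hg _ (hlams1 ω) hN'.le).1.trans (hg _ (hlams1 ω) hN'.le).2)]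
        exact (hg _ (hlams1 ω) hN'.le).1
    · rw [if_neg (by omega), if_neg (by omega), min_eq_right h.le]
      have hlt : mu ω < N := by have := hlamsN ω; omega
      rw [hVlt hlt]
      exact min_le_left _ _
  -- assemble
  refine ⟨lams, mus, hlamsST, (fun ω => Finset.mem_Icc.mpr ⟨hlams1 ω, hlamsN ω⟩), hmusST,
    (fun ω => Finset.mem_Icc.mpr ⟨hmus1 ω, hmusN ω⟩), ?_⟩
  intro lam mu hlam hlb hmu hmb
  have hmusb : ∀ ω, mus ω ∈ Finset.Icc 1 N := fun ω => Finset.mem_Icc.mpr ⟨hmus1 ω, hmusN ω⟩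
  have hlamsb : ∀ ω, lams ω ∈ Finset.Icc 1 N := fun ω => Finset.mem_Icc.mpr ⟨hlams1 ω, hlamsN ω⟩
  have hτ0ST : IsStoppingTime F (fun ω => min (lams ω) (mus ω)) := nv_min hlamsST hmusST
  have hτ01 : ∀ ω, 1 ≤ min (lams ω) (mus ω) := fun ω => le_min (hlams1 ω) (hmus1 ω)
  have hτ0N : ∀ ω, min (lams ω) (mus ω) ≤ N := fun ω => le_trans (min_le_left _ _) (hlamsN ω)
  have hsaddle_eq : neveuPayoff P X Y W lams mus = ∫ ω, V 1 ω ∂P := by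
    have h1 : neveuPayoff P X Y W lams mus = ∫ ω, V (min (lams ω) (mus ω)) ω ∂P := by
      simp only [neveuPayoff]
      refine integral_congr_ae ?_
      filter_upwards [hgood] with ω hg
      exact hcomp_eq ω hg
    rw [h1]
    refine heq_mart _ hτ0ST hτ01 hτ0N (fun n ω h1' hlt => ?_)
    have hlam' : n < lams ω := lt_of_lt_of_le hlt (min_le_left _ _)
    have hmu' : n < mus ω := lt_of_lt_of_le hlt (min_le_right _ _)
    have ha := hlams_min ω n h1' hlam'
    have hb := hmus_min ω n h1' hmu'
    have hnN : n < N := by have := hlamsN ω; omega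
    rw [hVlt hnN, max_eq_right ha.le, min_eq_right hb.le]
  constructor
  · rw [hsaddle_eq]
    have hτST : IsStoppingTime F (fun ω => min (lam ω) (mus ω)) := nv_min hlam hmusST
    have hτ1 : ∀ ω, 1 ≤ min (lam ω) (mus ω) :=
      fun ω => le_min (Finset.mem_Icc.mp (hlb ω)).1 (hmus1 ω)
    have hτN : ∀ ω, min (lam ω) (mus ω) ≤ N :=
      fun ω => le_trans (min_le_right _ _) (hmusN ω)
    have step1 : neveuPayoff P X Y W lam mus ≤ ∫ ω, V (min (lam ω) (mus ω)) ω ∂P := by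
      simp only [neveuPayoff]
      refine integral_mono_ae (hpayint lam mus hlam hlb hmusST hmusb)
        (hSVint _ hτST hτ1 hτN) ?_
      filter_upwards [hgood] with ω hg
      exact hcomp_le lam hlb ω hg
    refine step1.trans (hle_super _ hτST hτ1 hτN (fun n ω h1' hlt => ?_))
    have hmu' : n < mus ω := lt_of_lt_of_le hlt (min_le_right _ _)
    have hnN : n < N := by have := hmusN ω; omega
    have hb := hmus_min ω n h1' hmu'
    rw [hVlt hnN]
    exact le_min hb.le (le_max_right _ _)
  · rw [hsaddle_eq]
    have hτST : IsStoppingTime F (fun ω => min (lams ω) (mu ω)) := nv_min hlamsST hmu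
    have hτ1 : ∀ ω, 1 ≤ min (lams ω) (mu ω) :=
      fun ω => le_min (hlams1 ω) (Finset.mem_Icc.mp (hmb ω)).1
    have hτN : ∀ ω, min (lams ω) (mu ω) ≤ N :=
      fun ω => le_trans (min_le_left _ _) (hlamsN ω)
    have step1 : ∫ ω, V (min (lams ω) (mu ω)) ω ∂P ≤ neveuPayoff P X Y W lams mu := by
      simp only [neveuPayoff]
      refine integral_mono_ae (hSVint _ hτST hτ1 hτN)
        (hpayint lams mu hlamsST hlamsb hmu hmb) ?_
      filter_upwards [hgood] with ω hg
      exact hcomp_ge mu hmb ω hg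
    refine le_trans (hge_sub _ hτST hτ1 hτN (fun n ω h1' hlt => ?_)) step1
    have hlam' : n < lams ω := lt_of_lt_of_le hlt (min_le_left _ _)
    have hnN : n < N := by have := hlamsN ω; omega
    have ha := hlams_min ω n h1' hlam'
    rw [hVlt hnN, max_eq_right ha.le]
    exact min_le_right _ _

end
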